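/- Under the same setting as the median-of-means concentration (i.i.d. sample, regular partition into V blocks with ln(1/δ) ≤ V ≤ n/2), if f satisfies Var_P(f²) < ∞ and the condition L_1 · (√(Var_P f²)/Pf²) · √(V/n) ≤ 1/2 whenever Pf² ≠ 0, then P( Var_P(f) ≤ 2 P̄_B f² ) ≥ 1 − δ. -/

import Mathlib

set_option linter.unusedSectionVars false
set_option maxHeartbeats 1000000

open MeasureTheory ProbabilityTheory
open scoped ENNReal NNReal

lemma rvub_block_indep {Ω E : Type*} [MeasurableSpace Ω] [MeasurableSpace E]
    (μ : Measure Ω) [IsProbabilityMeasure μ] {n V : ℕ}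
    (X : Fin n → Ω → E) (hXmeas : ∀ i, Measurable (X i))
    (hindep : iIndepFun X μ)
    (f : E → ℝ) (hf : Measurable f)
    (B : Fin V → Finset (Fin n))
    (hdisj : Pairwise (fun K K' => Disjoint (B K) (B K'))) (t : ℝ)
    (S : Finset (Fin V)) :
    μ (⋂ K ∈ S, {ω | ((B K).card : ℝ)⁻¹ * ∑ i ∈ B K, (f (X i ω)) ^ 2 < t})
      = ∏ K ∈ S, μ {ω | ((B K).card : ℝ)⁻¹ * ∑ i ∈ B K, (f (X i ω)) ^ 2 < t} := by
  classical
  set Z : Fin V → Ω → ℝ := fun K ω => ((B K).card : ℝ)⁻¹ * ∑ i ∈ B K, (f (X i ω)) ^ 2 with hZ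
  induction S using Finset.induction_on with
  | empty => simp
  | @insert a S' ha IH =>
    have hdisjU : Disjoint (B a) (S'.biUnion B) := by
      rw [Finset.disjoint_biUnion_right]
      intro K hK
      exact hdisj (fun h => ha (h ▸ hK))
    have hI2 := hindep.indepFun_finset (B a) (S'.biUnion B) hdisjU hXmeas
    set φ : (↥(B a) → E) → ℝ :=
      fun v => ((B a).card : ℝ)⁻¹ * ∑ i ∈ (B a).attach, f (v i) ^ 2 with hφ
    have hφm : Measurable φ := by
      apply Measurable.const_mul
      exact Finset.measurable_sum _ (fun i _ => (hf.comp (measurable_pi_apply i)).pow_const 2)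
    set ψ : (↥(S'.biUnion B) → E) → (↥S' → ℝ) :=
      fun v K => ((B K.1).card : ℝ)⁻¹ *
        ∑ i ∈ (B K.1).attach, f (v ⟨i.1, Finset.mem_biUnion.2 ⟨K.1, K.2, i.2⟩⟩) ^ 2 with hψ
    have hψm : Measurable ψ := by
      apply measurable_pi_lambda
      intro K
      apply Measurable.const_mul
      exact Finset.measurable_sum _ (fun i _ => (hf.comp (measurable_pi_apply _)).pow_const 2)
    have hIZ : IndepFun (fun ω => φ (fun i : ↥(B a) => X i.1 ω))
        (fun ω => ψ (fun i : ↥(S'.biUnion B) => X i.1 ω)) μ :=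
      hI2.comp hφm hψm
    have e1 : (fun ω => φ (fun i : ↥(B a) => X i.1 ω)) = Z a := by
      funext ω
      simp only [hφ, hZ]
      rw [Finset.sum_attach (B a) (fun i => f (X i ω) ^ 2)]
    have e2 : ∀ ω, (fun K : ↥S' => Z K.1 ω)
        = ψ (fun i : ↥(S'.biUnion B) => X i.1 ω) := by
      intro ω
      funext K
      simp only [hψ, hZ]
      rw [Finset.sum_attach (B K.1) (fun i => f (X i ω) ^ 2)]
    rw [e1] at hIZ
    have hset1 : {ω | Z a ω < t} = Z a ⁻¹' Set.Iio t := rfl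
    have hset2 : (⋂ K ∈ S', {ω | Z K ω < t})
        = (fun ω => ψ (fun i : ↥(S'.biUnion B) => X i.1 ω)) ⁻¹'
          (Set.univ.pi fun _ => Set.Iio t) := by
      ext ω
      simp only [Set.mem_iInter, Set.mem_preimage, Set.mem_pi, Set.mem_univ, forall_true_left,
        Set.mem_setOf_eq, Set.mem_Iio, ← e2 ω]
      exact ⟨fun h K => h K.1 K.2, fun h K hK => h ⟨K, hK⟩⟩
    have IH' : μ (⋂ K ∈ S', {ω | Z K ω < t}) = ∏ K ∈ S', μ {ω | Z K ω < t} := IH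
    show μ (⋂ K ∈ insert a S', {ω | Z K ω < t}) = ∏ K ∈ insert a S', μ {ω | Z K ω < t}
    rw [Finset.set_biInter_insert, Finset.prod_insert ha, ← IH', hset1, hset2]
    exact hIZ.measure_inter_preimage_eq_mul _ _ measurableSet_Iio
      (MeasurableSet.univ_pi fun _ => measurableSet_Iio)



section Main

variable {Ω E : Type*} [MeasurableSpace Ω] [MeasurableSpace E]
    (μ : Measure Ω) [IsProbabilityMeasure μ]
    {n V : ℕ}
    (X : Fin n → Ω → E) (hXmeas : ∀ i, Measurable (X i))
    (P : Measure E) (hid : ∀ i, Measure.map (X i) μ = P)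
    (f : E → ℝ) (hf : Measurable f) (hf2 : MemLp (fun x => (f x) ^ 2) 2 P)

include hXmeas hid hf hf2 in
lemma rvub_memLp (i : Fin n) : MemLp (fun ω => (f (X i ω)) ^ 2) 2 μ := by
  have h : MemLp (fun x => (f x) ^ 2) 2 (Measure.map (X i) μ) := (hid i) ▸ hf2
  exact h.comp_of_map (hXmeas i).aemeasurable

include hXmeas hid hf in
lemma rvub_int (i : Fin n) :
    ∫ ω, (f (X i ω)) ^ 2 ∂μ = ∫ x, (f x) ^ 2 ∂P := by
  rw [← hid i, integral_map (hXmeas i).aemeasurable]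
  exact ((hf.pow_const 2).aestronglyMeasurable)

include hXmeas hid hf hf2 in
lemma rvub_var [IsProbabilityMeasure P] (i : Fin n) :
    variance (fun ω => (f (X i ω)) ^ 2) μ = variance (fun x => (f x) ^ 2) P := by
  have h1 : MemLp (fun ω => (f (X i ω)) ^ 2) 2 μ := rvub_memLp μ X hXmeas P hid f hf hf2 i
  rw [variance_eq_sub h1, variance_eq_sub hf2]
  have e2 : ∫ ω, ((f (X i ω)) ^ 2) ^ 2 ∂μ = ∫ x, ((f x) ^ 2) ^ 2 ∂P := by
    rw [← hid i, integral_map (hXmeas i).aemeasurable]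
    exact ((hf.pow_const 2).pow_const 2).aestronglyMeasurable
  have e1 := rvub_int μ X hXmeas P hid f hf i
  simp only [Pi.pow_apply]
  rw [e1, e2]

variable (hindep : iIndepFun X μ) [IsProbabilityMeasure P]

include hXmeas hid hf hf2 in
lemma rvub_Z_memLp (T : Finset (Fin n)) :
    MemLp (fun ω => ((T.card : ℝ)⁻¹ * ∑ i ∈ T, (f (X i ω)) ^ 2)) 2 μ := by
  have h : MemLp (fun ω => ∑ i ∈ T, (f (X i ω)) ^ 2) 2 μ := by
    have h0 := memLp_finset_sum' (μ := μ) T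
      (f := fun i ω => (f (X i ω)) ^ 2) (fun i _ => rvub_memLp μ X hXmeas P hid f hf hf2 i)
    have h1 : (∑ i ∈ T, fun ω => (f (X i ω)) ^ 2) = fun ω => ∑ i ∈ T, (f (X i ω)) ^ 2 := by
      funext ω; simp
    rwa [h1] at h0
  simpa [mul_comm] using h.const_mul ((T.card : ℝ)⁻¹)

include hXmeas hid hf hf2 in
lemma rvub_Z_int (T : Finset (Fin n)) (hT : T.Nonempty) :
    ∫ ω, ((T.card : ℝ)⁻¹ * ∑ i ∈ T, (f (X i ω)) ^ 2) ∂μ = ∫ x, (f x) ^ 2 ∂P := by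
  rw [integral_const_mul, integral_finset_sum T
    (fun i _ => (rvub_memLp μ X hXmeas P hid f hf hf2 i).integrable one_le_two)]
  have : ∀ i ∈ T, ∫ ω, (f (X i ω)) ^ 2 ∂μ = ∫ x, (f x) ^ 2 ∂P :=
    fun i _ => rvub_int μ X hXmeas P hid f hf i
  rw [Finset.sum_congr rfl this, Finset.sum_const, nsmul_eq_mul, ← mul_assoc,
    inv_mul_cancel₀ (by exact_mod_cast hT.card_pos.ne'), one_mul]

include hXmeas hid hf hf2 hindep in
lemma rvub_Z_var (T : Finset (Fin n)) :
    variance (fun ω => ((T.card : ℝ)⁻¹ * ∑ i ∈ T, (f (X i ω)) ^ 2)) μ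
      = ((T.card : ℝ)⁻¹) ^ 2 * (T.card * variance (fun x => (f x) ^ 2) P) := by
  have hsum : variance (fun ω => ∑ i ∈ T, (f (X i ω)) ^ 2) μ
      = T.card * variance (fun x => (f x) ^ 2) P := by
    have hpair : Set.Pairwise ↑T fun i j =>
        IndepFun (fun ω => (f (X i ω)) ^ 2) (fun ω => (f (X j ω)) ^ 2) μ := by
      intro i _ j _ hij
      exact (hindep.indepFun hij).comp (hf.pow_const 2) (hf.pow_const 2)
    have := IndepFun.variance_sum (μ := μ) (X := fun i ω => (f (X i ω)) ^ 2) (s := T)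
      (fun i _ => rvub_memLp μ X hXmeas P hid f hf hf2 i) hpair
    have e : variance (∑ i ∈ T, fun ω => (f (X i ω)) ^ 2) μ
        = variance (fun ω => ∑ i ∈ T, (f (X i ω)) ^ 2) μ := by
      congr 1; funext ω; simp
    rw [e] at this
    rw [this, Finset.sum_congr rfl (fun i _ => rvub_var μ X hXmeas P hid f hf hf2 i),
      Finset.sum_const, nsmul_eq_mul]
  rw [← hsum, ← variance_const_mul]

include hXmeas hid hf hf2 hindep in
lemma rvub_cheb (T : Finset (Fin n)) (hT : T.Nonempty)
    (hm : 0 < ∫ x, (f x) ^ 2 ∂P) :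
    μ {ω | ((T.card : ℝ)⁻¹ * ∑ i ∈ T, (f (X i ω)) ^ 2) < (∫ x, (f x) ^ 2 ∂P) / 2}
      ≤ ENNReal.ofReal ((variance (fun x => (f x) ^ 2) P / T.card)
          / ((∫ x, (f x) ^ 2 ∂P) / 2) ^ 2) := by
  set m := ∫ x, (f x) ^ 2 ∂P with hm'
  set Z : Ω → ℝ := fun ω => ((T.card : ℝ)⁻¹ * ∑ i ∈ T, (f (X i ω)) ^ 2) with hZ
  have hZmem : MemLp Z 2 μ := rvub_Z_memLp μ X hXmeas P hid f hf hf2 T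
  have hZint : μ[Z] = m := rvub_Z_int μ X hXmeas P hid f hf hf2 T hT
  have hZvar : variance Z μ = variance (fun x => (f x) ^ 2) P / T.card := by
    rw [rvub_Z_var μ X hXmeas P hid f hf hf2 hindep T]
    have hc : (T.card : ℝ) ≠ 0 := by exact_mod_cast hT.card_pos.ne'
    field_simp
  have hsub : {ω | Z ω < m / 2} ⊆ {ω | m / 2 ≤ |Z ω - μ[Z]|} := by
    intro ω hω
    simp only [Set.mem_setOf_eq] at hω ⊢
    rw [hZint, abs_sub_comm]
    rw [abs_of_nonneg (by linarith)]
    linarith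
  calc μ {ω | Z ω < m / 2} ≤ μ {ω | m / 2 ≤ |Z ω - μ[Z]|} := measure_mono hsub
    _ ≤ ENNReal.ofReal (variance Z μ / (m / 2) ^ 2) :=
        meas_ge_le_variance_div_sq hZmem (by linarith)
    _ = ENNReal.ofReal ((variance (fun x => (f x) ^ 2) P / T.card) / (m / 2) ^ 2) := by
        rw [hZvar]

end Main


lemma rvub_arith1 (σ2 m c nn vv : ℝ) (hσ2 : 0 ≤ σ2) (hm : 0 < m)
    (hnn : 0 < nn) (hvv : 0 < vv)
    (hc : nn / (2 * vv) ≤ c)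
    (hCf : 2 * Real.sqrt (6 * Real.exp 1) * (Real.sqrt σ2 / m) * Real.sqrt (vv / nn) ≤ 1 / 2) :
    (σ2 / c) / ((m / 2) ^ 2) ≤ 1 / (12 * Real.exp 1) := by
  set e := Real.exp 1 with he
  have he0 : 0 < e := Real.exp_pos 1
  have hc0 : 0 < c := lt_of_lt_of_le (by positivity) hc
  have hL0 : 0 ≤ 2 * Real.sqrt (6 * e) * (Real.sqrt σ2 / m) * Real.sqrt (vv / nn) := by
    positivity
  have hsq := pow_le_pow_left₀ hL0 hCf 2
  have e1 : Real.sqrt (6 * e) ^ 2 = 6 * e := Real.sq_sqrt (by positivity)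
  have e2 : Real.sqrt σ2 ^ 2 = σ2 := Real.sq_sqrt hσ2
  have e3 : Real.sqrt (vv / nn) ^ 2 = vv / nn := Real.sq_sqrt (by positivity)
  have key : 96 * e * σ2 * vv ≤ m ^ 2 * nn := by
    have expand : (2 * Real.sqrt (6 * e) * (Real.sqrt σ2 / m) * Real.sqrt (vv / nn)) ^ 2
        = 4 * (6 * e) * (σ2 / m ^ 2) * (vv / nn) := by
      rw [mul_pow, mul_pow, mul_pow, div_pow, e1, e2, e3]; norm_num
    rw [expand] at hsq
    have h4 : 4 * (6 * e) * σ2 * vv / (m ^ 2 * nn) ≤ 1 / 4 := by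
      calc 4 * (6 * e) * σ2 * vv / (m ^ 2 * nn)
          = 4 * (6 * e) * (σ2 / m ^ 2) * (vv / nn) := by field_simp
        _ ≤ (1/2)^2 := hsq
        _ = 1/4 := by norm_num
    rw [div_le_div_iff₀ (by positivity) (by norm_num)] at h4
    nlinarith
  rw [div_div, div_le_div_iff₀ (by positivity) (by positivity)]
  have hc' : nn / (2 * vv) * (m^2/4) ≤ c * (m/2)^2 := by
    have : (0:ℝ) ≤ m^2/4 := by positivity
    nlinarith
  have : 12 * e * σ2 ≤ nn / (2*vv) * (m^2/4) := by
    rw [div_mul_eq_mul_div, le_div_iff₀ (by positivity)]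
    nlinarith
  nlinarith

lemma rvub_arith2 (V k : ℕ) (hk : V ≤ 2 * k) (hkV : k ≤ V) (δ : ℝ) (hδ0 : 0 < δ)
    (hVlow : Real.log (1 / δ) ≤ (V : ℝ)) :
    (V.choose k : ℝ) * (1 / (12 * Real.exp 1)) ^ k ≤ δ := by
  set e := Real.exp 1 with he
  have he0 : 0 < e := Real.exp_pos 1
  have hq0 : (0:ℝ) ≤ 1 / (12 * e) := by positivity
  have h1 : (V.choose k : ℝ) ≤ 2 ^ V := by
    have : V.choose k ≤ 2 ^ V := by
      calc V.choose k ≤ ∑ i ∈ Finset.range (V + 1), V.choose i :=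
            Finset.single_le_sum (fun i _ => Nat.zero_le _)
              (Finset.mem_range.2 (Nat.lt_succ_of_le hkV))
        _ = 2 ^ V := Nat.sum_range_choose V
    exact_mod_cast this
  have h2 : (2:ℝ) ^ V ≤ 4 ^ k := by
    rw [show (4:ℝ) = 2 ^ 2 by norm_num, ← pow_mul]
    exact pow_le_pow_right₀ one_le_two hk
  have h3 : (4:ℝ) ^ k * (1 / (12 * e)) ^ k = (1 / (3 * e)) ^ k := by
    rw [← mul_pow]; congr 1; field_simp; ring
  have hexp2 : Real.exp 2 ≤ 3 * e := by
    have : Real.exp 2 = e * e := by rw [he, ← Real.exp_add]; norm_num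
    nlinarith [Real.exp_one_lt_d9]
  have h4 : (1 / (3 * e)) ^ k ≤ Real.exp (-(V:ℝ)) := by
    have hV3 : Real.exp (V:ℝ) ≤ (3 * e) ^ k := by
      calc Real.exp (V:ℝ) ≤ Real.exp ((2 * k : ℕ) : ℝ) :=
            Real.exp_le_exp.2 (by exact_mod_cast hk)
        _ = (Real.exp 2) ^ k := by
            rw [← Real.exp_nat_mul]; congr 1; push_cast; ring
        _ ≤ (3 * e) ^ k := pow_le_pow_left₀ (Real.exp_pos 2).le hexp2 k
    rw [Real.exp_neg]
    rw [one_div, inv_pow]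
    exact inv_anti₀ (Real.exp_pos _) hV3
  have h5 : Real.exp (-(V:ℝ)) ≤ δ := by
    have : -(V:ℝ) ≤ Real.log δ := by
      rw [one_div, Real.log_inv] at hVlow; linarith
    calc Real.exp (-(V:ℝ)) ≤ Real.exp (Real.log δ) := Real.exp_le_exp.2 this
      _ = δ := Real.exp_log hδ0
  calc (V.choose k : ℝ) * (1 / (12 * e)) ^ k
      ≤ 2 ^ V * (1 / (12 * e)) ^ k := by
        exact mul_le_mul_of_nonneg_right h1 (by positivity)
    _ ≤ 4 ^ k * (1 / (12 * e)) ^ k := mul_le_mul_of_nonneg_right h2 (by positivity)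
    _ = (1 / (3 * e)) ^ k := h3
    _ ≤ Real.exp (-(V:ℝ)) := h4
    _ ≤ δ := h5


theorem robust_variance_upper_bound
    {Ω E : Type*} [MeasurableSpace Ω] [MeasurableSpace E]
    (μ : Measure Ω) [IsProbabilityMeasure μ]
    (n V : ℕ) (hn : 0 < n) (hV : 0 < V)
    (X : Fin n → Ω → E) (hXmeas : ∀ i, Measurable (X i))
    (hindep : iIndepFun X μ)
    (P : Measure E) (hid : ∀ i, Measure.map (X i) μ = P)
    (f : E → ℝ) (hf : Measurable f) (hf2 : MemLp (fun x => (f x) ^ 2) 2 P)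
    (δ : ℝ) (hδ : δ ∈ Set.Ioo (0 : ℝ) 1)
    (hVlow : Real.log (1 / δ) ≤ (V : ℝ)) (hVup : (V : ℝ) ≤ (n : ℝ) / 2)
    (B : Fin V → Finset (Fin n))
    (hdisj : Pairwise (fun K K' => Disjoint (B K) (B K')))
    (hcover : Finset.univ.biUnion B = Finset.univ)
    (hreg : ∀ K, |((B K).card : ℝ) - (n : ℝ) / V| ≤ 1)
    (hCf : ∫ x, (f x) ^ 2 ∂P ≠ 0 →
      (2 * Real.sqrt (6 * Real.exp 1)) *
          (Real.sqrt (variance (fun x => (f x) ^ 2) P) / ∫ x, (f x) ^ 2 ∂P) *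
          Real.sqrt ((V : ℝ) / n) ≤ 1 / 2)
    (med2 : Ω → ℝ)
    (hmed2 : ∀ ω,
      (V : ℝ) ≤ 2 * (Finset.univ.filter (fun K =>
          ((B K).card : ℝ)⁻¹ * ∑ i ∈ B K, (f (X i ω)) ^ 2 ≤ med2 ω)).card ∧
      (V : ℝ) ≤ 2 * (Finset.univ.filter (fun K =>
          med2 ω ≤ ((B K).card : ℝ)⁻¹ * ∑ i ∈ B K, (f (X i ω)) ^ 2)).card) :
    1 - ENNReal.ofReal δ ≤ μ {ω | variance f P ≤ 2 * med2 ω} := by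
  classical
  have hPprob : IsProbabilityMeasure P := by
    rw [← hid ⟨0, hn⟩]
    exact Measure.isProbabilityMeasure_map (hXmeas _).aemeasurable
  set Z : Fin V → Ω → ℝ :=
    fun K ω => ((B K).card : ℝ)⁻¹ * ∑ i ∈ B K, (f (X i ω)) ^ 2 with hZdef
  set m := ∫ x, (f x) ^ 2 ∂P with hm
  have hm0 : 0 ≤ m := integral_nonneg fun x => sq_nonneg _
  have hvar_le_m : variance f P ≤ m := by
    have := variance_le_expectation_sq (μ := P) (X := f) hf.aestronglyMeasurable
    simpa [hm] using this
  have hZnn : ∀ K ω, 0 ≤ Z K ω := fun K ω =>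
    mul_nonneg (by positivity) (Finset.sum_nonneg fun i _ => sq_nonneg _)
  have hmednn : ∀ ω, 0 ≤ med2 ω := by
    intro ω
    obtain ⟨h1, -⟩ := hmed2 ω
    have hpos : 0 < (Finset.univ.filter fun K => Z K ω ≤ med2 ω).card := by
      by_contra h
      push_neg at h
      have h0 : (Finset.univ.filter fun K => Z K ω ≤ med2 ω).card = 0 := by omega
      rw [h0] at h1
      have : (0:ℝ) < V := by exact_mod_cast hV
      norm_num at h1
      linarith
    obtain ⟨K, hK⟩ := Finset.card_pos.1 hpos
    exact le_trans (hZnn K ω) (Finset.mem_filter.1 hK).2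
  by_cases hmz : m = 0
  · have huniv : {ω | variance f P ≤ 2 * med2 ω} = Set.univ := by
      ext ω
      simp only [Set.mem_setOf_eq, Set.mem_univ, iff_true]
      have h1 : variance f P ≤ 0 := hmz ▸ hvar_le_m
      nlinarith [hmednn ω]
    rw [huniv, measure_univ]
    exact tsub_le_self
  · have hmpos : 0 < m := hm0.lt_of_ne (Ne.symm hmz)
    set σ2 := variance (fun x => (f x) ^ 2) P with hσ2
    have hσ2nn : 0 ≤ σ2 := variance_nonneg _ _
    set k := V - V / 2 with hk
    have hkV : k ≤ V := Nat.sub_le _ _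
    have hVk : V ≤ 2 * k := by omega
    have hVpos : (0:ℝ) < V := by exact_mod_cast hV
    have hnpos : (0:ℝ) < n := by exact_mod_cast hn
    have hcard : ∀ K : Fin V, (n:ℝ) / (2*V) ≤ ((B K).card : ℝ) := by
      intro K
      have habs := abs_le.1 (hreg K)
      have hnVge : (2:ℝ) ≤ (n:ℝ)/V := by
        rw [le_div_iff₀ hVpos]; linarith
      have h2 : (n:ℝ)/V = 2 * ((n:ℝ)/(2*V)) := by field_simp
      have h3 : (n:ℝ)/V - 1 ≤ ((B K).card : ℝ) := by linarith [habs.1]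
      have h4 : (1:ℝ) ≤ (n:ℝ)/(2*V) := by linarith
      linarith
    have hcardpos : ∀ K, 0 < (B K).card := by
      intro K
      have h1 : (0:ℝ) < ((B K).card : ℝ) :=
        lt_of_lt_of_le (by positivity) (hcard K)
      exact_mod_cast h1
    have hcheb : ∀ K : Fin V,
        μ {ω | Z K ω < m / 2} ≤ ENNReal.ofReal (1 / (12 * Real.exp 1)) := by
      intro K
      have h1 := rvub_cheb μ X hXmeas P hid f hf hf2 hindep (B K)
        (Finset.card_pos.1 (hcardpos K)) hmpos
      refine le_trans h1 (ENNReal.ofReal_le_ofReal ?_)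
      exact rvub_arith1 σ2 m ((B K).card : ℝ) (n:ℝ) (V:ℝ) hσ2nn hmpos hnpos hVpos
        (hcard K) (hCf hmz)
    set A : Fin V → Set Ω := fun K => {ω | Z K ω < m / 2} with hA
    set bad : Set Ω :=
      ⋃ S ∈ Finset.powersetCard k (Finset.univ : Finset (Fin V)), ⋂ K ∈ S, A K with hbad
    have hZmeas : ∀ K, Measurable (Z K) := fun K =>
      (Finset.measurable_sum _ fun i _ => ((hf.comp (hXmeas i)).pow_const 2)).const_mul _
    have hAmeas : ∀ K, MeasurableSet (A K) :=
      fun K => measurableSet_lt (hZmeas K) measurable_const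
    have hbadmeas : MeasurableSet bad := by
      apply MeasurableSet.biUnion (Finset.powersetCard k Finset.univ : Finset (Finset (Fin V))).countable_toSet
      intro S _
      exact MeasurableSet.biInter (S.countable_toSet) fun K _ => hAmeas K
    have hsubset : {ω | variance f P ≤ 2 * med2 ω}ᶜ ⊆ bad := by
      intro ω hω
      simp only [Set.mem_compl_iff, Set.mem_setOf_eq, not_le] at hω
      have hmed : med2 ω < m / 2 := by nlinarith [hvar_le_m, variance_nonneg f P]
      set T := Finset.univ.filter (fun K => Z K ω ≤ med2 ω) with hT
      have hTcard : k ≤ T.card := by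
        have h1 := (hmed2 ω).1
        have h2 : V ≤ 2 * T.card := by exact_mod_cast h1
        omega
      obtain ⟨S, hST, hScard⟩ := Finset.exists_subset_card_eq hTcard
      refine Set.mem_biUnion
        (Finset.mem_powersetCard.2 ⟨Finset.subset_univ S, hScard⟩) ?_
      refine Set.mem_biInter fun K hK => ?_
      have hKT := (Finset.mem_filter.1 (hST hK)).2
      show Z K ω < m / 2
      exact lt_of_le_of_lt hKT hmed
    have hbadle : μ bad ≤ ENNReal.ofReal δ := by
      have step2 : ∀ S ∈ Finset.powersetCard k (Finset.univ : Finset (Fin V)),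
          μ (⋂ K ∈ S, A K) ≤ ENNReal.ofReal (1 / (12 * Real.exp 1)) ^ k := by
        intro S hS
        have hprod : μ (⋂ K ∈ S, A K) = ∏ K ∈ S, μ (A K) :=
          rvub_block_indep μ X hXmeas hindep f hf B hdisj (m/2) S
        calc μ (⋂ K ∈ S, A K) = ∏ K ∈ S, μ (A K) := hprod
          _ ≤ ∏ _K ∈ S, ENNReal.ofReal (1 / (12 * Real.exp 1)) :=
              Finset.prod_le_prod' fun K _ => hcheb K
          _ = ENNReal.ofReal (1 / (12 * Real.exp 1)) ^ S.card := Finset.prod_const _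
          _ = ENNReal.ofReal (1 / (12 * Real.exp 1)) ^ k := by
              rw [(Finset.mem_powersetCard.1 hS).2]
      calc μ bad ≤ ∑ S ∈ Finset.powersetCard k (Finset.univ : Finset (Fin V)),
            μ (⋂ K ∈ S, A K) := measure_biUnion_finset_le _ _
        _ ≤ ∑ _S ∈ Finset.powersetCard k (Finset.univ : Finset (Fin V)),
            ENNReal.ofReal (1 / (12 * Real.exp 1)) ^ k := Finset.sum_le_sum step2
        _ = (Finset.powersetCard k (Finset.univ : Finset (Fin V))).card •
            ENNReal.ofReal (1 / (12 * Real.exp 1)) ^ k := Finset.sum_const _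
        _ = (V.choose k : ℝ≥0∞) * ENNReal.ofReal (1 / (12 * Real.exp 1)) ^ k := by
            rw [Finset.card_powersetCard, Finset.card_univ, Fintype.card_fin, nsmul_eq_mul]
        _ ≤ ENNReal.ofReal δ := by
            rw [← ENNReal.ofReal_pow (by positivity), ← ENNReal.ofReal_natCast,
              ← ENNReal.ofReal_mul (by positivity)]
            exact ENNReal.ofReal_le_ofReal (rvub_arith2 V k hVk hkV δ hδ.1 hVlow)
    calc 1 - ENNReal.ofReal δ ≤ 1 - μ bad := tsub_le_tsub_left hbadle 1
      _ = μ badᶜ := (prob_compl_eq_one_sub hbadmeas).symm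
      _ ≤ μ {ω | variance f P ≤ 2 * med2 ω} :=
          measure_mono (Set.compl_subset_comm.mp hsubset)
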